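/- For every integer n ≥ 3 and every p ∈ [0,1), the function f(p) = (1/(1-p)) · ((1-p^n)/(1-p) - n·p) is strictly decreasing on [0,1). -/

import Mathlib

lemma foraging_aux (m : ℕ) (x : ℝ) :
    (1 - x) ^ 2 * ∑ k ∈ Finset.range m, ((m : ℝ) - k) * x ^ k
      = m - (m + 1) * x + x ^ (m + 1) := by
  induction m with
  | zero => simp
  | succ m ih =>
    have hg : (1 - x) * ∑ k ∈ Finset.range (m + 1), x ^ k = 1 - x ^ (m + 1) := by
      linear_combination -geom_sum_mul x (m + 1)
    have h1 : ∑ k ∈ Finset.range (m + 1), (((m : ℝ) + 1) - k) * x ^ k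
        = (∑ k ∈ Finset.range (m + 1), ((m : ℝ) - k) * x ^ k)
          + ∑ k ∈ Finset.range (m + 1), x ^ k := by
      rw [← Finset.sum_add_distrib]
      apply Finset.sum_congr rfl
      intros; ring
    have h2 : ∑ k ∈ Finset.range (m + 1), ((m : ℝ) - k) * x ^ k
        = ∑ k ∈ Finset.range m, ((m : ℝ) - k) * x ^ k := by
      rw [Finset.sum_range_succ]; simp
    push_cast
    rw [h1, h2]
    linear_combination ih + (1 - x) * hg

/-- For every integer `n ≥ 3`, `f(p) = (1/(1-p)) * ((1-p^n)/(1-p) - n p)`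
is strictly decreasing on `[0,1)`. -/
theorem foraging_f_strictAnti (n : ℕ) (hn : 3 ≤ n) :
    StrictAntiOn
      (fun p : ℝ => (1 / (1 - p)) * ((1 - p ^ n) / (1 - p) - (n : ℝ) * p))
      (Set.Ico (0 : ℝ) 1) := by
  obtain ⟨m, rfl⟩ : ∃ m, n = m + 1 := ⟨n - 1, by omega⟩
  have hm : 2 ≤ m := by omega
  have key : ∀ p : ℝ, p ∈ Set.Ico (0 : ℝ) 1 →
      (1 / (1 - p)) * ((1 - p ^ (m + 1)) / (1 - p) - ((m + 1 : ℕ) : ℝ) * p)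
        = ((m : ℝ) + 1) - ∑ k ∈ Finset.range m, ((m : ℝ) - k) * p ^ k := by
    intro p hp
    have hp1 : (1 : ℝ) - p ≠ 0 := by
      have := hp.2; intro h; linarith
    have h := foraging_aux m p
    field_simp
    push_cast
    linear_combination h
  intro a ha b hb hab
  simp only
  rw [key a ha, key b hb]
  have hsum : ∑ k ∈ Finset.range m, ((m : ℝ) - k) * a ^ k
      < ∑ k ∈ Finset.range m, ((m : ℝ) - k) * b ^ k := by
    apply Finset.sum_lt_sum
    · intro k hk
      have hk' : k < m := Finset.mem_range.mp hk
      have hc : (0 : ℝ) ≤ (m : ℝ) - k := by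
        have : (k : ℝ) < m := by exact_mod_cast hk'
        linarith
      exact mul_le_mul_of_nonneg_left (pow_le_pow_left₀ ha.1 hab.le k) hc
    · refine ⟨1, Finset.mem_range.mpr (by omega), ?_⟩
      have hc : (0 : ℝ) < (m : ℝ) - 1 := by
        have : (2 : ℝ) ≤ m := by exact_mod_cast hm
        linarith
      simp only [pow_one]
      push_cast
      exact mul_lt_mul_of_pos_left hab hc
  linarith
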